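/- Let J be a real symmetric positive definite n × n matrix, let f : ℝⁿ → ℝⁿ be monotone (i.e. (u − v)ᵀ(f(u) − f(v)) ≥ 0 for all u, v), and let c ∈ ℝⁿ be a constant vector. Let q̄, w̄ ∈ ℝⁿ be an equilibrium pair, i.e. 0 = −f(q̄) + w̄ + c. Suppose q : ℝ → ℝⁿ is differentiable and w : ℝ → ℝⁿ satisfies J·q′(t) = −f(q(t)) + w(t) + c for all t. Then the storage function H(t) = ½·(q(t) − q̄)ᵀ·J·(q(t) − q̄) is differentiable and satisfies H′(t) ≤ (q(t) − q̄)ᵀ·(w(t) − w̄) for all t, i.e. the flow dynamics are shifted passive with passive output q − q̄. -/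

import Mathlib

open Matrix

/-- Theorem 3 of the paper (shifted passivity of the flow dynamics): if `J` is
symmetric positive definite, `f` is monotone, `(q̄, w̄)` is an equilibrium pair
of `J q̇ = −f(q) + w + c`, and `q` solves the dynamics with input `w`, then the
shifted kinetic energy `H(t) = ½ (q t − q̄)ᵀ J (q t − q̄)` is differentiable and
satisfies `H′(t) ≤ (q t − q̄)ᵀ (w t − w̄)`. -/
theorem flow_dynamics_shifted_passive (n : ℕ) (J : Matrix (Fin n) (Fin n) ℝ)
    (hJ : J.PosDef)
    (f : (Fin n → ℝ) → (Fin n → ℝ))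
    (hf : ∀ u v : Fin n → ℝ, 0 ≤ (u - v) ⬝ᵥ (f u - f v))
    (c qbar wbar : Fin n → ℝ)
    (heq : (0 : Fin n → ℝ) = -f qbar + wbar + c)
    (q q' : ℝ → Fin n → ℝ) (w : ℝ → Fin n → ℝ)
    (hq : ∀ t, HasDerivAt q (q' t) t)
    (hdyn : ∀ t, J.mulVec (q' t) = -f (q t) + w t + c) :
    ∀ t : ℝ,
      DifferentiableAt ℝ
        (fun s => (1 / 2 : ℝ) * ((q s - qbar) ⬝ᵥ J.mulVec (q s - qbar))) t ∧
      deriv (fun s => (1 / 2 : ℝ) * ((q s - qbar) ⬝ᵥ J.mulVec (q s - qbar))) t ≤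
        (q t - qbar) ⬝ᵥ (w t - wbar) := by
  intro t
  -- symmetry of J
  have hJsym : ∀ i j, J i j = J j i := by
    intro i j
    have := hJ.isHermitian
    have h := congrFun (congrFun this.eq j) i
    simpa [Matrix.conjTranspose_apply] using h
  have hswap : ∀ u v : Fin n → ℝ, u ⬝ᵥ J.mulVec v = v ⬝ᵥ J.mulVec u := by
    intro u v
    simp only [dotProduct, Matrix.mulVec, Finset.mul_sum]
    rw [Finset.sum_comm]
    apply Finset.sum_congr rfl
    intro i _
    apply Finset.sum_congr rfl
    intro j _
    rw [hJsym i j]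
    ring
  -- componentwise derivatives
  have hcomp : ∀ i, HasDerivAt (fun s => q s i - qbar i) (q' t i) t := by
    intro i
    exact ((hasDerivAt_pi.1 (hq t)) i).sub_const _
  have hinner : ∀ i, HasDerivAt (fun s => ∑ j, J i j * (q s j - qbar j))
      (∑ j, J i j * q' t j) t := by
    intro i
    exact HasDerivAt.fun_sum fun j _ => (hcomp j).const_mul (J i j)
  have hg : HasDerivAt (fun s => ∑ i, (q s i - qbar i) * ∑ j, J i j * (q s j - qbar j))
      (∑ i, (q' t i * ∑ j, J i j * (q t j - qbar j)
        + (q t i - qbar i) * ∑ j, J i j * q' t j)) t :=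
    HasDerivAt.fun_sum fun i _ => (hcomp i).mul (hinner i)
  -- rewrite the statement's function in sum form
  have hfun : (fun s => (1 / 2 : ℝ) * ((q s - qbar) ⬝ᵥ J.mulVec (q s - qbar)))
      = fun s => (1 / 2 : ℝ) * ∑ i, (q s i - qbar i) * ∑ j, J i j * (q s j - qbar j) := by
    funext s
    simp [dotProduct, Matrix.mulVec, Pi.sub_apply]
  have hderivsum : (∑ i, (q' t i * ∑ j, J i j * (q t j - qbar j)
        + (q t i - qbar i) * ∑ j, J i j * q' t j))
      = q' t ⬝ᵥ J.mulVec (q t - qbar) + (q t - qbar) ⬝ᵥ J.mulVec (q' t) := by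
    simp [dotProduct, Matrix.mulVec, Pi.sub_apply, Finset.sum_add_distrib]
  have hH : HasDerivAt (fun s => (1 / 2 : ℝ) * ((q s - qbar) ⬝ᵥ J.mulVec (q s - qbar)))
      ((q t - qbar) ⬝ᵥ J.mulVec (q' t)) t := by
    rw [hfun]
    have := hg.const_mul (1 / 2 : ℝ)
    refine this.congr_deriv ?_
    rw [hderivsum, hswap (q' t) (q t - qbar)]
    ring
  refine ⟨hH.differentiableAt, ?_⟩
  rw [hH.deriv]
  -- the bound
  have hc : c = f qbar - wbar := by
    funext i
    have := congrFun heq i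
    simp [Pi.add_apply, Pi.neg_apply] at this
    simp [Pi.sub_apply]
    linarith
  rw [hdyn t, hc,
    show -f (q t) + w t + (f qbar - wbar) = (w t - wbar) - (f (q t) - f qbar) by abel,
    dotProduct_sub]
  linarith [hf (q t) qbar]
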